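/- arXiv:1712.07414 — 2 statements merged into one kernel-verified Lean document; each statement's English description precedes it below -/
import Mathlib

section
/- Let Q be a positivity preserving form with compact resolvent, f an eigenfunction with eigenvalue λ, and C₁, ..., C_l the (Q,𝒜)-nodal domains of f (for a nest 𝒜 with f± ∈ D(Q^𝒜_{F±})). Then f·1_{C_i} ∈ D(Q) for each i, f = Σᵢ f·1_{C_i}, and Q(f·1_{C_i}, f·1_{C_j}) ≥ 0 for all i, j. -/
open MeasureTheory Filter Topology RealInnerProductSpace

noncomputable section

variable {X : Type*} [MeasurableSpace X]

open scoped Classical in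
/-- Multiplication by the indicator function of a set `A`, as a map on `L²`. -/
def indMul {μ : Measure X} (A : Set X) (f : Lp ℝ 2 μ) : Lp ℝ 2 μ :=
  if h : MeasurableSet A then ((Lp.memLp f).indicator h).toLp else 0

/-- A closed (nonnegative, symmetric) quadratic form in the wide sense on `L²(X,m)`:
its domain is a not necessarily dense subspace which is complete in the form norm. -/
structure WideForm (μ : Measure X) where
  dom : Submodule ℝ (Lp ℝ 2 μ)
  Q : Lp ℝ 2 μ → Lp ℝ 2 μ → ℝ
  symm : ∀ u v, Q u v = Q v u
  add_left : ∀ u v w, Q (u + v) w = Q u w + Q v w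
  smul_left : ∀ (c : ℝ) u v, Q (c • u) v = c * Q u v
  nonneg : ∀ u, 0 ≤ Q u u
  closed : ∀ f : ℕ → Lp ℝ 2 μ, (∀ n, f n ∈ dom) →
    (∀ ε > 0, ∃ N, ∀ m ≥ N, ∀ n ≥ N,
      Q (f m - f n) (f m - f n) + ‖f m - f n‖ ^ 2 < ε) →
    ∃ g ∈ dom, Tendsto (fun n => Q (f n - g) (f n - g) + ‖f n - g‖ ^ 2) atTop (nhds 0)

/-- `G` is the resolvent family of the closed form `T`. -/
def WideForm.IsResolvent {μ : Measure X} (T : WideForm μ)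
    (G : ℝ → Lp ℝ 2 μ →L[ℝ] Lp ℝ 2 μ) : Prop :=
  ∀ α > 0, ∀ u, G α u ∈ T.dom ∧
    ∀ v ∈ T.dom, T.Q (G α u) v + α * ⟪G α u, v⟫ = ⟪u, v⟫

/-- `T` is positivity preserving. -/
def WideForm.PosPres {μ : Measure X} (T : WideForm μ) : Prop :=
  ∀ u ∈ T.dom, |u| ∈ T.dom ∧ T.Q |u| |u| ≤ T.Q u u

/-- The domain of the restriction of `T` to `B` with respect to the nest `𝒜`:
the form-norm closure of the union of the domains of the restrictions to `B ∩ 𝒜 n`. -/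
def NestDom {μ : Measure X} (T : WideForm μ) (𝒜 : ℕ → Set X) (B : Set X) :
    Set (Lp ℝ 2 μ) :=
  {f | f ∈ T.dom ∧ ∃ g : ℕ → Lp ℝ 2 μ,
    (∀ k, g k ∈ T.dom ∧ ∃ n, indMul (B ∩ 𝒜 n) (g k) = g k) ∧
    Tendsto (fun k => T.Q (g k - f) (g k - f) + ‖g k - f‖ ^ 2) atTop (nhds 0)}

/-- `C` is invariant for the restriction `Q^𝒜_B` (form characterization, valid for
positivity preserving forms). -/
def NestInvariant {μ : Measure X} (T : WideForm μ) (𝒜 : ℕ → Set X) (B C : Set X) : Prop :=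
  MeasurableSet C ∧ ∀ f ∈ NestDom T 𝒜 B, indMul C f ∈ NestDom T 𝒜 B ∧
    T.Q f f = T.Q (indMul C f) (indMul C f) + T.Q (f - indMul C f) (f - indMul C f)

/-- `C` is a connected component of the restriction `Q^𝒜_B`: an invariant set of positive
measure whose restriction is irreducible. -/
def NestComponent {μ : Measure X} (T : WideForm μ) (𝒜 : ℕ → Set X) (B C : Set X) : Prop :=
  NestInvariant T 𝒜 B C ∧ 0 < μ C ∧
    ∀ D : Set X, MeasurableSet D → D ⊆ C →
      (∀ f ∈ NestDom T 𝒜 B, indMul C f = f →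
        (indMul D f ∈ NestDom T 𝒜 B ∧
          T.Q f f = T.Q (indMul D f) (indMul D f)
            + T.Q (f - indMul D f) (f - indMul D f))) →
      μ D = 0 ∨ μ (C \ D) = 0

section IndMul
variable {μ : Measure X}

lemma indMul_coeFn {A : Set X} (hA : MeasurableSet A) (f : Lp ℝ 2 μ) :
    indMul A f =ᵐ[μ] A.indicator ⇑f := by
  classical
  simp only [indMul, dif_pos hA]
  exact MemLp.coeFn_toLp _

lemma indMul_not_meas {A : Set X} (hA : ¬ MeasurableSet A) (f : Lp ℝ 2 μ) :
    indMul A f = 0 := by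
  classical
  simp only [indMul, dif_neg hA]

lemma indMul_congr {A : Set X} {f g : Lp ℝ 2 μ}
    (h : A.indicator ⇑f =ᵐ[μ] A.indicator ⇑g) : indMul A f = indMul A g := by
  by_cases hA : MeasurableSet A
  · exact Lp.ext ((indMul_coeFn hA f).trans (h.trans (indMul_coeFn hA g).symm))
  · rw [indMul_not_meas hA, indMul_not_meas hA]

lemma indMul_zero (A : Set X) : indMul A (0 : Lp ℝ 2 μ) = 0 := by
  by_cases hA : MeasurableSet A
  · refine Lp.ext ((indMul_coeFn hA 0).trans ?_)
    filter_upwards [Lp.coeFn_zero ℝ 2 μ] with x hx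
    rw [Pi.zero_apply] at hx
    by_cases hxA : x ∈ A
    · rw [Set.indicator_of_mem hxA]
    · rw [Set.indicator_of_notMem hxA, hx]
  · exact indMul_not_meas hA 0

lemma indMul_add (A : Set X) (f g : Lp ℝ 2 μ) :
    indMul A (f + g) = indMul A f + indMul A g := by
  by_cases hA : MeasurableSet A
  · refine Lp.ext ?_
    filter_upwards [indMul_coeFn hA (f + g), indMul_coeFn hA f, indMul_coeFn hA g,
      Lp.coeFn_add f g, Lp.coeFn_add (indMul A f) (indMul A g)] with x h1 h2 h3 h4 h5
    rw [h1, h5, Pi.add_apply, h2, h3]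
    by_cases hx : x ∈ A
    · rw [Set.indicator_of_mem hx, Set.indicator_of_mem hx, Set.indicator_of_mem hx, h4,
        Pi.add_apply]
    · rw [Set.indicator_of_notMem hx, Set.indicator_of_notMem hx,
        Set.indicator_of_notMem hx, add_zero]
  · simp [indMul_not_meas hA]

lemma indMul_neg (A : Set X) (f : Lp ℝ 2 μ) : indMul A (-f) = - indMul A f := by
  have h := indMul_add A f (-f)
  rw [add_neg_cancel, indMul_zero] at h
  exact eq_neg_of_add_eq_zero_right h.symm

lemma indMul_idem {A : Set X} (hA : MeasurableSet A) (f : Lp ℝ 2 μ) :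
    indMul A (indMul A f) = indMul A f := by
  refine Lp.ext ?_
  filter_upwards [indMul_coeFn hA (indMul A f), indMul_coeFn hA f] with x h1 h2
  rw [h1]
  by_cases hx : x ∈ A
  · simp [Set.indicator_apply, hx]
  · simp [Set.indicator_apply, hx, h2]

lemma indMul_indMul_null {A B : Set X} (hA : MeasurableSet A) (hB : MeasurableSet B)
    (h : μ (A ∩ B) = 0) (f : Lp ℝ 2 μ) : indMul A (indMul B f) = 0 := by
  refine Lp.ext ?_
  filter_upwards [indMul_coeFn hA (indMul B f), indMul_coeFn hB f,
    Lp.coeFn_zero ℝ 2 μ, measure_eq_zero_iff_ae_notMem.mp h] with x h1 h2 h3 h4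
  rw [h1, h3]
  by_cases hx : x ∈ A
  · have hxB : x ∉ B := fun hB' => h4 ⟨hx, hB'⟩
    simp [Set.indicator_apply, hx, h2, hxB]
  · simp [Set.indicator_apply, hx]

lemma indMul_eq_self_mono {A B : Set X} (hB : MeasurableSet B) (hAB : A ⊆ B)
    {f : Lp ℝ 2 μ} (h : indMul A f = f) : indMul B f = f := by
  by_cases hA : MeasurableSet A
  · have h' := indMul_coeFn hA f
    rw [h] at h'
    refine Lp.ext ?_
    filter_upwards [indMul_coeFn hB f, h'] with x h1 h2
    rw [h1]
    by_cases hx : x ∈ B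
    · simp [Set.indicator_apply, hx]
    · have hxA : x ∉ A := fun hx' => hx (hAB hx')
      rw [h2]
      simp [Set.indicator_apply, hx, hxA]
  · rw [indMul_not_meas hA] at h
    rw [← h, indMul_zero]

lemma Lp_coeFn_sum {ι : Type*} (s : Finset ι) (F : ι → Lp ℝ 2 μ) :
    ⇑(∑ i ∈ s, F i) =ᵐ[μ] fun x => ∑ i ∈ s, F i x := by
  classical
  induction s using Finset.induction with
  | empty => simp only [Finset.sum_empty]; exact Lp.coeFn_zero ℝ 2 μ
  | insert a s hnot ih =>
    rw [Finset.sum_insert hnot]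
    filter_upwards [Lp.coeFn_add (F a) (∑ i ∈ s, F i), ih] with x h1 h2
    rw [h1, Pi.add_apply, h2, Finset.sum_insert hnot]

end IndMul

section Forms
variable {μ : Measure X} {T : WideForm μ}

lemma Q_add_right (u v w : Lp ℝ 2 μ) : T.Q u (v + w) = T.Q u v + T.Q u w := by
  rw [T.symm u, T.add_left, T.symm v u, T.symm w u]

lemma Q_neg_left (u v : Lp ℝ 2 μ) : T.Q (-u) v = - T.Q u v := by
  have h := T.smul_left (-1) u v
  simpa using h

lemma Q_neg_right (u v : Lp ℝ 2 μ) : T.Q u (-v) = - T.Q u v := by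
  rw [T.symm u, Q_neg_left, T.symm v u]

lemma Q_expand (u v : Lp ℝ 2 μ) :
    T.Q (u + v) (u + v) = T.Q u u + 2 * T.Q u v + T.Q v v := by
  rw [T.add_left, Q_add_right, Q_add_right, T.symm v u]; ring

lemma Q_expand_sub (u v : Lp ℝ 2 μ) :
    T.Q (u - v) (u - v) = T.Q u u - 2 * T.Q u v + T.Q v v := by
  rw [sub_eq_add_neg, Q_expand, Q_neg_right, Q_neg_left, Q_neg_right]; ring

lemma Q_cross_le (u v : Lp ℝ 2 μ) : 2 * T.Q u v ≤ T.Q u u + T.Q v v := by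
  have h := T.nonneg (u - v)
  rw [Q_expand_sub] at h; linarith

lemma nestDom_add {𝒜 : ℕ → Set X} (hmono : Monotone 𝒜)
    (hAmeas : ∀ n, MeasurableSet (𝒜 n)) {B : Set X} (hB : MeasurableSet B)
    {u v : Lp ℝ 2 μ} (hu : u ∈ NestDom T 𝒜 B) (hv : v ∈ NestDom T 𝒜 B) :
    u + v ∈ NestDom T 𝒜 B := by
  obtain ⟨hud, g, hg, hgt⟩ := hu
  obtain ⟨hvd, h, hh, hht⟩ := hv
  refine ⟨T.dom.add_mem hud hvd, fun k => g k + h k, fun k => ?_, ?_⟩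
  · obtain ⟨hgd, n₁, hn₁⟩ := hg k
    obtain ⟨hhd, n₂, hn₂⟩ := hh k
    refine ⟨T.dom.add_mem hgd hhd, max n₁ n₂, ?_⟩
    have h1 : indMul (B ∩ 𝒜 (max n₁ n₂)) (g k) = g k :=
      indMul_eq_self_mono (hB.inter (hAmeas _))
        (Set.inter_subset_inter_right _ (hmono (le_max_left _ _))) hn₁
    have h2 : indMul (B ∩ 𝒜 (max n₁ n₂)) (h k) = h k :=
      indMul_eq_self_mono (hB.inter (hAmeas _))
        (Set.inter_subset_inter_right _ (hmono (le_max_right _ _))) hn₂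
    rw [indMul_add, h1, h2]
  · have key : ∀ k, T.Q (g k + h k - (u + v)) (g k + h k - (u + v))
        + ‖g k + h k - (u + v)‖ ^ 2
        ≤ 2 * (T.Q (g k - u) (g k - u) + ‖g k - u‖ ^ 2)
          + 2 * (T.Q (h k - v) (h k - v) + ‖h k - v‖ ^ 2) := by
      intro k
      have he : g k + h k - (u + v) = (g k - u) + (h k - v) := by abel
      rw [he, Q_expand]
      have h1 := Q_cross_le (T := T) (g k - u) (h k - v)
      have h2 : ‖g k - u + (h k - v)‖ ^ 2 ≤ 2 * ‖g k - u‖ ^ 2 + 2 * ‖h k - v‖ ^ 2 := by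
        have h3 := norm_add_le (g k - u) (h k - v)
        have h4 : ‖g k - u + (h k - v)‖ ^ 2 ≤ (‖g k - u‖ + ‖h k - v‖) ^ 2 :=
          pow_le_pow_left₀ (norm_nonneg _) h3 2
        nlinarith [sq_nonneg (‖g k - u‖ - ‖h k - v‖)]
      linarith
    have hpos : ∀ k, 0 ≤ T.Q (g k + h k - (u + v)) (g k + h k - (u + v))
        + ‖g k + h k - (u + v)‖ ^ 2 := fun k => add_nonneg (T.nonneg _) (sq_nonneg _)
    have hlim := (hgt.const_mul 2).add (hht.const_mul 2)
    rw [mul_zero, add_zero] at hlim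
    exact squeeze_zero hpos key hlim

lemma cross_zero {𝒜 : ℕ → Set X} (hmono : Monotone 𝒜)
    (hAmeas : ∀ n, MeasurableSet (𝒜 n)) {B : Set X} (hB : MeasurableSet B)
    {Ci Cj : Set X} (hi : NestInvariant T 𝒜 B Ci) (hj : NestInvariant T 𝒜 B Cj)
    (hd : μ (Ci ∩ Cj) = 0) {u : Lp ℝ 2 μ} (hu : u ∈ NestDom T 𝒜 B) :
    T.Q (indMul Ci u) (indMul Cj u) = 0 := by
  set a := indMul Ci u with ha_def
  set b := indMul Cj u with hb_def
  have ha := (hi.2 u hu).1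
  have hb := (hj.2 u hu).1
  have hab : a + b ∈ NestDom T 𝒜 B := nestDom_add hmono hAmeas hB ha hb
  have hkey := (hi.2 (a + b) hab).2
  have h1 : indMul Ci (a + b) = a := by
    rw [ha_def, hb_def, indMul_add, indMul_idem hi.1, indMul_indMul_null hi.1 hj.1 hd,
      add_zero]
  rw [h1, add_sub_cancel_left] at hkey
  have h2 := Q_expand (T := T) a b
  linarith

lemma cross_nonpos (hpp : T.PosPres) {a b : Lp ℝ 2 μ}
    (ha : a ∈ T.dom) (hb : b ∈ T.dom) (habs : |a - b| = a + b) : T.Q a b ≤ 0 := by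
  have h := (hpp (a - b) (T.dom.sub_mem ha hb)).2
  rw [habs] at h
  have h1 := Q_expand (T := T) a b
  have h2 := Q_expand_sub (T := T) a b
  linarith

end Forms

/-- decomposition of an eigenfunction along its `(Q,𝒜)`-nodal domains:
`f·1_{C_i} ∈ D(Q)`, `f = Σ f·1_{C_i}`, and `Q(f·1_{C_i}, f·1_{C_j}) ≥ 0`. -/
theorem eigenfunction_nodal_decomposition {μ : Measure X} (T : WideForm μ)
    (hpp : T.PosPres) (hdense : Dense (T.dom : Set (Lp ℝ 2 μ)))
    (G : ℝ → Lp ℝ 2 μ →L[ℝ] Lp ℝ 2 μ) (hG : T.IsResolvent G)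
    (hcpt : ∀ α > 0, IsCompactOperator (G α))
    (lam : ℝ) (f : Lp ℝ 2 μ) (hf : f ∈ T.dom) (hf0 : f ≠ 0)
    (heig : ∀ v ∈ T.dom, T.Q f v = lam * ⟪f, v⟫)
    (𝒜 : ℕ → Set X) (hmono : Monotone 𝒜) (hmeas : ∀ n, MeasurableSet (𝒜 n))
    (hfp : f ⊔ 0 ∈ NestDom T 𝒜 {x | 0 < (f : X → ℝ) x})
    (hfm : (-f) ⊔ 0 ∈ NestDom T 𝒜 {x | (f : X → ℝ) x < 0})
    (l : ℕ) (C : Fin l → Set X)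
    (hC : ∀ i,
      (NestComponent T 𝒜 {x | 0 < (f : X → ℝ) x} (C i) ∧
        μ (C i \ {x | 0 < (f : X → ℝ) x}) = 0) ∨
      (NestComponent T 𝒜 {x | (f : X → ℝ) x < 0} (C i) ∧
        μ (C i \ {x | (f : X → ℝ) x < 0}) = 0))
    (hdisj : ∀ i j, i ≠ j → μ (C i ∩ C j) = 0)
    (hcover : μ (({x | 0 < (f : X → ℝ) x} ∪ {x | (f : X → ℝ) x < 0}) \ ⋃ i, C i) = 0) :
    (∀ i, indMul (C i) f ∈ T.dom) ∧
      f = ∑ i, indMul (C i) f ∧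
      ∀ i j, 0 ≤ T.Q (indMul (C i) f) (indMul (C j) f) := by
  classical
  have hfmeas : Measurable ⇑f := (Lp.stronglyMeasurable f).measurable
  have hFp : MeasurableSet {x | 0 < ⇑f x} := measurableSet_lt measurable_const hfmeas
  have hFm : MeasurableSet {x | ⇑f x < 0} := measurableSet_lt hfmeas measurable_const
  set p := f ⊔ 0 with hp_def
  set q := (-f) ⊔ 0 with hq_def
  have hp_ae : ∀ᵐ x ∂μ, ⇑p x = ⇑f x ⊔ 0 := by
    filter_upwards [Lp.coeFn_sup f (0 : Lp ℝ 2 μ), Lp.coeFn_zero ℝ 2 μ] with x h1 h2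
    rw [h1, Pi.sup_apply, h2, Pi.zero_apply]
  have hq_ae : ∀ᵐ x ∂μ, ⇑q x = (-⇑f x) ⊔ 0 := by
    filter_upwards [Lp.coeFn_sup (-f) (0 : Lp ℝ 2 μ), Lp.coeFn_zero ℝ 2 μ,
      Lp.coeFn_neg f] with x h1 h2 h3
    rw [h1, Pi.sup_apply, h2, Pi.zero_apply, h3, Pi.neg_apply]
  have hCmeas : ∀ i, MeasurableSet (C i) := by
    intro i; rcases hC i with ⟨h, _⟩ | ⟨h, _⟩ <;> exact h.1.1
  have hpos_eq : ∀ i, μ (C i \ {x | 0 < ⇑f x}) = 0 →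
      indMul (C i) f = indMul (C i) p := by
    intro i hnull
    refine indMul_congr ?_
    filter_upwards [hp_ae, measure_eq_zero_iff_ae_notMem.mp hnull] with x h1 h2
    by_cases hx : x ∈ C i
    · rw [Set.indicator_of_mem hx, Set.indicator_of_mem hx, h1]
      have hxF : 0 < ⇑f x := by
        by_contra hc
        exact h2 ⟨hx, hc⟩
      exact (sup_eq_left.mpr hxF.le).symm
    · rw [Set.indicator_of_notMem hx, Set.indicator_of_notMem hx]
  have hneg_eq : ∀ i, μ (C i \ {x | ⇑f x < 0}) = 0 →
      indMul (C i) f = - indMul (C i) q := by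
    intro i hnull
    rw [← indMul_neg]
    refine indMul_congr ?_
    filter_upwards [hq_ae, Lp.coeFn_neg q, measure_eq_zero_iff_ae_notMem.mp hnull]
      with x h1 h3 h2
    by_cases hx : x ∈ C i
    · rw [Set.indicator_of_mem hx, Set.indicator_of_mem hx]
      have hxF : ⇑f x < 0 := by
        by_contra hc
        exact h2 ⟨hx, hc⟩
      rw [h3, Pi.neg_apply, h1, sup_eq_left.mpr (by linarith : (0:ℝ) ≤ -⇑f x), neg_neg]
    · rw [Set.indicator_of_notMem hx, Set.indicator_of_notMem hx]
  have part1 : ∀ i, indMul (C i) f ∈ T.dom := by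
    intro i
    rcases hC i with ⟨hi, hni⟩ | ⟨hi, hni⟩
    · rw [hpos_eq i hni]
      exact ((hi.1.2 p hfp).1).1
    · rw [hneg_eq i hni]
      exact T.dom.neg_mem ((hi.1.2 q hfm).1).1
  have part2 : f = ∑ i, indMul (C i) f := by
    refine Lp.ext ?_
    have hind : ∀ᵐ x ∂μ, ∀ i, ⇑(indMul (C i) f) x = (C i).indicator ⇑f x :=
      ae_all_iff.mpr fun i => indMul_coeFn (hCmeas i) f
    have hdisj' : ∀ᵐ x ∂μ, ∀ ij : Fin l × Fin l, ij.1 ≠ ij.2 → x ∉ C ij.1 ∩ C ij.2 := by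
      rw [ae_all_iff]
      intro ij
      by_cases h : ij.1 = ij.2
      · exact Filter.Eventually.of_forall fun x hne => absurd h hne
      · filter_upwards [measure_eq_zero_iff_ae_notMem.mp (hdisj _ _ h)] with x hx _
        exact hx
    filter_upwards [Lp_coeFn_sum Finset.univ (fun i => indMul (C i) f), hind, hdisj',
      measure_eq_zero_iff_ae_notMem.mp hcover] with x hsx hix hdx hcx
    rw [hsx, Finset.sum_congr rfl (fun i _ => hix i)]
    by_cases hf0x : ⇑f x = 0
    · rw [hf0x]
      symm
      refine Finset.sum_eq_zero fun i _ => ?_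
      by_cases hxi : x ∈ C i
      · rw [Set.indicator_of_mem hxi, hf0x]
      · rw [Set.indicator_of_notMem hxi]
    · have hxFpm : x ∈ {x | 0 < ⇑f x} ∪ {x | ⇑f x < 0} := by
        rcases lt_or_gt_of_ne hf0x with h | h
        · exact Or.inr h
        · exact Or.inl h
      have hxu : x ∈ ⋃ i, C i := by
        by_contra hc
        exact hcx ⟨hxFpm, hc⟩
      obtain ⟨i₀, hxi⟩ := Set.mem_iUnion.mp hxu
      symm
      rw [Finset.sum_eq_single i₀]
      · exact Set.indicator_of_mem hxi _
      · intro j _ hj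
        exact Set.indicator_of_notMem (fun hxj => hdx (j, i₀) hj ⟨hxj, hxi⟩) _
      · intro hi₀
        exact absurd (Finset.mem_univ i₀) hi₀
  have hmix : ∀ i j, indMul (C i) p ∈ T.dom → indMul (C j) q ∈ T.dom →
      T.Q (indMul (C i) p) (indMul (C j) q) ≤ 0 := by
    intro i j hdi hdj
    refine cross_nonpos hpp hdi hdj ?_
    refine Lp.ext ?_
    filter_upwards [Lp.coeFn_abs (indMul (C i) p - indMul (C j) q),
      Lp.coeFn_sub (indMul (C i) p) (indMul (C j) q),
      Lp.coeFn_add (indMul (C i) p) (indMul (C j) q),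
      indMul_coeFn (hCmeas i) p, indMul_coeFn (hCmeas j) q, hp_ae, hq_ae]
      with x h1 h2 h3 h4 h5 h6 h7
    rw [h1, h2, Pi.sub_apply, h3, Pi.add_apply, h4, h5]
    rcases le_or_gt (⇑f x) 0 with hfx | hfx
    · have hp0 : ⇑p x = 0 := by rw [h6]; exact sup_eq_right.mpr hfx
      have hA : (C i).indicator ⇑p x = 0 := by
        by_cases hxi : x ∈ C i
        · rw [Set.indicator_of_mem hxi, hp0]
        · rw [Set.indicator_of_notMem hxi]
      have hB : 0 ≤ (C j).indicator ⇑q x := by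
        by_cases hxj : x ∈ C j
        · rw [Set.indicator_of_mem hxj, h7]; exact le_sup_right
        · rw [Set.indicator_of_notMem hxj]
      rw [hA, zero_sub, abs_neg, abs_of_nonneg hB, zero_add]
    · have hq0 : ⇑q x = 0 := by
        rw [h7]; exact sup_eq_right.mpr (by linarith)
      have hB : (C j).indicator ⇑q x = 0 := by
        by_cases hxj : x ∈ C j
        · rw [Set.indicator_of_mem hxj, hq0]
        · rw [Set.indicator_of_notMem hxj]
      have hA : 0 ≤ (C i).indicator ⇑p x := by
        by_cases hxi : x ∈ C i
        · rw [Set.indicator_of_mem hxi, h6]; exact le_sup_right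
        · rw [Set.indicator_of_notMem hxi]
      rw [hB, sub_zero, abs_of_nonneg hA, add_zero]
  refine ⟨part1, part2, ?_⟩
  intro i j
  by_cases hij : i = j
  · subst hij; exact T.nonneg _
  rcases hC i with ⟨hi, hni⟩ | ⟨hi, hni⟩ <;> rcases hC j with ⟨hj, hnj⟩ | ⟨hj, hnj⟩
  · rw [hpos_eq i hni, hpos_eq j hnj,
      cross_zero hmono hmeas hFp hi.1 hj.1 (hdisj i j hij) hfp]
  · rw [hpos_eq i hni, hneg_eq j hnj, Q_neg_right]
    have := hmix i j ((hi.1.2 p hfp).1).1 ((hj.1.2 q hfm).1).1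
    linarith
  · rw [hneg_eq i hni, hpos_eq j hnj, Q_neg_left]
    have h := hmix j i ((hj.1.2 p hfp).1).1 ((hi.1.2 q hfm).1).1
    rw [T.symm (indMul (C j) p) (indMul (C i) q)] at h
    linarith
  · rw [hneg_eq i hni, hneg_eq j hnj, Q_neg_left, Q_neg_right, neg_neg,
      cross_zero hmono hmeas hFm hi.1 hj.1 (hdisj i j hij) hfm]
end
end

section
/- Let Q be a local, regular Dirichlet form on a locally compact, separable, locally connected metric space X with Radon measure m of full support. Then for every open set A ⊆ X and every topological connected component B of A, the restriction (Q^A)_B of the part Q^A to functions vanishing a.e. outside B equals the part Q^B, i.e., D((Q^A)_B) = D(Q^B) = the form-norm closure of C_c(B) ∩ D(Q). -/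
open MeasureTheory Filter Topology RealInnerProductSpace

noncomputable section

variable {X : Type*} [MeasurableSpace X]

/-- The domain of the part `Q^A` of `Q` on an open set `A`: form-norm closure of
`C_c(A) ∩ D(Q)`. -/
def PartDom {Y : Type*} [MeasurableSpace Y] [TopologicalSpace Y] {μ : Measure Y}
    (T : WideForm μ) (A : Set Y) : Set (Lp ℝ 2 μ) :=
  {u | u ∈ T.dom ∧ ∃ g : ℕ → Lp ℝ 2 μ,
    (∀ m, g m ∈ T.dom ∧ ∃ φ : Y → ℝ, Continuous φ ∧ HasCompactSupport φ ∧
      tsupport φ ⊆ A ∧ (g m : Y → ℝ) =ᵐ[μ] φ) ∧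
    Tendsto (fun m => T.Q (g m - u) (g m - u) + ‖g m - u‖ ^ 2) atTop (nhds 0)}

namespace WideForm

variable {μ : Measure X} (T : WideForm μ)

theorem add_right' (u v w : Lp ℝ 2 μ) : T.Q u (v + w) = T.Q u v + T.Q u w := by
  rw [T.symm, T.add_left, T.symm v u, T.symm w u]

theorem neg_left' (u v : Lp ℝ 2 μ) : T.Q (-u) v = - T.Q u v := by
  have h := T.smul_left (-1) u v
  simpa [neg_one_smul] using h

theorem sub_left' (u v w : Lp ℝ 2 μ) : T.Q (u - v) w = T.Q u w - T.Q v w := by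
  rw [sub_eq_add_neg, T.add_left, T.neg_left', sub_eq_add_neg]

theorem sub_right' (u v w : Lp ℝ 2 μ) : T.Q u (v - w) = T.Q u v - T.Q u w := by
  rw [T.symm, T.sub_left', T.symm v u, T.symm w u]

/-- The squared form norm. -/
def en (u : Lp ℝ 2 μ) : ℝ := T.Q u u + ‖u‖ ^ 2

theorem en_nonneg (u : Lp ℝ 2 μ) : 0 ≤ T.en u :=
  add_nonneg (T.nonneg u) (by positivity)

theorem norm_sq_le_en (u : Lp ℝ 2 μ) : ‖u‖ ^ 2 ≤ T.en u :=
  le_add_of_nonneg_left (T.nonneg u)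

theorem en_neg (u : Lp ℝ 2 μ) : T.en (-u) = T.en u := by
  unfold en
  rw [norm_neg]
  congr 1
  rw [T.neg_left', T.symm, T.neg_left', T.symm]
  ring

theorem en_add_le (u v : Lp ℝ 2 μ) : T.en (u + v) ≤ 2 * T.en u + 2 * T.en v := by
  have h1 : 0 ≤ T.Q (u - v) (u - v) := T.nonneg _
  have e1 : T.Q (u + v) (u + v) + T.Q (u - v) (u - v) = 2 * T.Q u u + 2 * T.Q v v := by
    rw [T.add_left, T.add_right', T.add_right', T.sub_left', T.sub_right', T.sub_right',
      T.symm v u]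
    ring
  have h2 : ‖u + v‖ ^ 2 ≤ 2 * ‖u‖ ^ 2 + 2 * ‖v‖ ^ 2 := by
    have h3 := norm_add_le u v
    have h4 : ‖u + v‖ ^ 2 ≤ (‖u‖ + ‖v‖) ^ 2 :=
      pow_le_pow_left₀ (norm_nonneg _) h3 2
    nlinarith [sq_nonneg (‖u‖ - ‖v‖)]
  unfold en
  nlinarith

theorem en_add_eq (u v : Lp ℝ 2 μ) (h : T.Q u v = 0) (h' : ⟪u, v⟫ = 0) :
    T.en (u + v) = T.en u + T.en v := by
  have e1 : T.Q (u + v) (u + v) = T.Q u u + T.Q v v := by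
    rw [T.add_left, T.add_right', T.add_right', T.symm v u, h]
    ring
  have e2 : ‖u + v‖ ^ 2 = ‖u‖ ^ 2 + ‖v‖ ^ 2 := by
    rw [norm_add_sq_real, h']
    ring
  unfold en
  rw [e1, e2]
  ring

theorem tendsto_of_en {f : ℕ → Lp ℝ 2 μ} {l : Lp ℝ 2 μ}
    (h : Tendsto (fun n => T.Q (f n - l) (f n - l) + ‖f n - l‖ ^ 2) atTop (nhds 0)) :
    Tendsto f atTop (nhds l) := by
  rw [tendsto_iff_norm_sub_tendsto_zero]
  have h2 : Tendsto (fun n => ‖f n - l‖ ^ 2) atTop (nhds 0) :=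
    squeeze_zero (fun n => by positivity) (fun n => le_add_of_nonneg_left (T.nonneg _)) h
  have h3 : Tendsto (fun n => Real.sqrt (‖f n - l‖ ^ 2)) atTop (nhds (Real.sqrt 0)) :=
    (Real.continuous_sqrt.tendsto 0).comp h2
  rw [Real.sqrt_zero] at h3
  exact h3.congr fun n => Real.sqrt_sq (norm_nonneg _)

end WideForm

theorem inner_eq_zero_of_ae_mul {μ : Measure X} {f g : Lp ℝ 2 μ}
    (h : (fun x => (f : X → ℝ) x * (g : X → ℝ) x) =ᵐ[μ] 0) : ⟪f, g⟫ = 0 := by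
  rw [MeasureTheory.L2.inner_def]
  have h2 : (fun a => ⟪(f : X → ℝ) a, (g : X → ℝ) a⟫) =ᵐ[μ] 0 := by
    filter_upwards [h] with x hx
    simpa [RCLike.inner_apply, or_comm] using hx
  rw [integral_congr_ae h2]
  simp

theorem indMul_eq_self_iff {μ : Measure X} {Bs : Set X} (hBs : MeasurableSet Bs)
    (u : Lp ℝ 2 μ) : indMul Bs u = u ↔ (u : X → ℝ) =ᵐ[μ] Bs.indicator u := by
  unfold indMul
  rw [dif_pos hBs]
  constructor
  · intro h
    have h2 := ((Lp.memLp u).indicator hBs).coeFn_toLp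
    rw [h] at h2
    exact h2
  · intro h
    exact Lp.ext ((MemLp.coeFn_toLp _).trans h.symm)

theorem ae_indicator_of_tendsto {μ : Measure X} {Bs : Set X} (hBs : MeasurableSet Bs)
    {u : Lp ℝ 2 μ} {g : ℕ → Lp ℝ 2 μ}
    (hg0 : ∀ m, ∀ᵐ x ∂μ, x ∉ Bs → (g m : X → ℝ) x = 0)
    (hconv : Tendsto g atTop (nhds u)) :
    (u : X → ℝ) =ᵐ[μ] Bs.indicator u := by
  have hnorm : Tendsto (fun m => ‖g m - u‖) atTop (nhds 0) :=
    tendsto_iff_norm_sub_tendsto_zero.1 hconv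
  have key : eLpNorm (Bsᶜ.indicator (u : X → ℝ)) 2 μ = 0 := by
    have hle : ∀ m, eLpNorm (Bsᶜ.indicator (u : X → ℝ)) 2 μ ≤ ENNReal.ofReal ‖g m - u‖ := by
      intro m
      have h1 : Bsᶜ.indicator (u : X → ℝ) =ᵐ[μ] Bsᶜ.indicator (⇑(u - g m)) := by
        filter_upwards [hg0 m, Lp.coeFn_sub u (g m)] with x hx hsub
        by_cases hxB : x ∈ Bsᶜ
        · rw [Set.indicator_of_mem hxB, Set.indicator_of_mem hxB, hsub, Pi.sub_apply,
            hx hxB, sub_zero]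
        · rw [Set.indicator_of_notMem hxB, Set.indicator_of_notMem hxB]
      rw [eLpNorm_congr_ae h1]
      calc eLpNorm (Bsᶜ.indicator (⇑(u - g m))) 2 μ ≤ eLpNorm (⇑(u - g m)) 2 μ :=
            eLpNorm_indicator_le _
        _ = ENNReal.ofReal ‖u - g m‖ := by
            rw [Lp.norm_def, ENNReal.ofReal_toReal (Lp.eLpNorm_lt_top _).ne]
        _ = ENNReal.ofReal ‖g m - u‖ := by rw [norm_sub_rev]
    have h0 : Tendsto (fun m => ENNReal.ofReal ‖g m - u‖) atTop (nhds 0) := by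
      rw [show (0 : ENNReal) = ENNReal.ofReal 0 by simp]
      exact ENNReal.tendsto_ofReal hnorm
    exact le_antisymm (le_of_tendsto_of_tendsto' tendsto_const_nhds h0 hle) (zero_le)
  have hzero : Bsᶜ.indicator (u : X → ℝ) =ᵐ[μ] 0 :=
    (eLpNorm_eq_zero_iff ((Lp.aestronglyMeasurable u).indicator hBs.compl)
      (by norm_num)).1 key
  filter_upwards [hzero] with x hx
  by_cases hxB : x ∈ Bs
  · rw [Set.indicator_of_mem hxB]
  · have h2 : (u : X → ℝ) x = 0 := by
      have h3 : Bsᶜ.indicator (u : X → ℝ) x = 0 := hx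
      rwa [Set.indicator_of_mem (by exact hxB : x ∈ Bsᶜ)] at h3
    rw [Set.indicator_of_notMem hxB, h2]

theorem cut_dom {μ : Measure X} (T : WideForm μ)
    (hD : ∀ u ∈ T.dom, ∃ v ∈ T.dom,
      ((v : X → ℝ) =ᵐ[μ] fun x => max 0 (min ((u : X → ℝ) x) 1)) ∧ T.Q v v ≤ T.Q u u)
    {v : Lp ℝ 2 μ} {ψ : X → ℝ} (hv : v ∈ T.dom) (hψ : (v : X → ℝ) =ᵐ[μ] ψ)
    {c : ℝ} (hc : 0 < c) :
    ∃ w ∈ T.dom, (w : X → ℝ) =ᵐ[μ] fun x => max 0 (min (ψ x) c) := by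
  obtain ⟨w', hw', hw'eq, -⟩ := hD (c⁻¹ • v) (T.dom.smul_mem _ hv)
  refine ⟨c • w', T.dom.smul_mem _ hw', ?_⟩
  filter_upwards [Lp.coeFn_smul c w', hw'eq, Lp.coeFn_smul c⁻¹ v, hψ] with x h1 h2 h3 h4
  rw [h1]
  simp only [Pi.smul_apply, smul_eq_mul]
  rw [h2, h3]
  simp only [Pi.smul_apply, smul_eq_mul]
  rw [h4, mul_max_of_nonneg _ _ hc.le, mul_min_of_nonneg _ _ hc.le, mul_zero, mul_one,
    mul_inv_cancel_left₀ hc.ne']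

theorem min_dom {μ : Measure X} (T : WideForm μ) (hposp : T.PosPres)
    {v w : Lp ℝ 2 μ} {fv fw : X → ℝ} (hv : v ∈ T.dom) (hw : w ∈ T.dom)
    (hfv : (v : X → ℝ) =ᵐ[μ] fv) (hfw : (w : X → ℝ) =ᵐ[μ] fw) :
    ∃ z ∈ T.dom, (z : X → ℝ) =ᵐ[μ] fun x => min (fv x) (fw x) := by
  refine ⟨(2⁻¹ : ℝ) • (v + w - |v - w|), T.dom.smul_mem _ (T.dom.sub_mem
    (T.dom.add_mem hv hw) (hposp _ (T.dom.sub_mem hv hw)).1), ?_⟩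
  filter_upwards [Lp.coeFn_smul (2⁻¹ : ℝ) (v + w - |v - w|), Lp.coeFn_sub (v + w) |v - w|,
    Lp.coeFn_add v w, Lp.coeFn_abs (v - w), Lp.coeFn_sub v w, hfv, hfw]
    with x h1 h2 h3 h4 h5 h6 h7
  have e : (((2⁻¹ : ℝ) • (v + w - |v - w|) : Lp ℝ 2 μ) : X → ℝ) x
      = 2⁻¹ * ((fv x + fw x) - |fv x - fw x|) := by
    rw [h1]
    simp only [Pi.smul_apply, smul_eq_mul]
    rw [h2]
    simp only [Pi.sub_apply]
    rw [h3]
    simp only [Pi.add_apply]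
    rw [h4, h5]
    simp only [Pi.sub_apply]
    rw [h6, h7]
  rw [e]
  rcases le_total (fv x) (fw x) with h | h
  · rw [min_eq_left h, abs_of_nonpos (by linarith)]
    ring
  · rw [min_eq_right h, abs_of_nonneg (by linarith)]
    ring
set_option maxHeartbeats 2000000 in
set_option synthInstance.maxHeartbeats 400000 in
/-- for a local regular Dirichlet form on a locally compact, separable,
locally connected metric space with a Radon measure of full support, the restriction of
the part `Q^A` to a topological connected component `B` of the open set `A` equals the
part `Q^B`: their domains coincide. -/
theorem part_restriction_eq_part {Y : Type*} [MetricSpace Y] [MeasurableSpace Y]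
    [BorelSpace Y] [LocallyCompactSpace Y] [TopologicalSpace.SeparableSpace Y]
    [LocallyConnectedSpace Y]
    (μ : Measure Y) [Measure.Regular μ] [Measure.IsOpenPosMeasure μ]
    (T : WideForm μ)
    (hdensedom : Dense (T.dom : Set (Lp ℝ 2 μ)))
    (hposp : T.PosPres)
    (hDirichlet : ∀ u ∈ T.dom, ∃ v ∈ T.dom,
      ((v : Y → ℝ) =ᵐ[μ] fun x => max 0 (min ((u : Y → ℝ) x) 1)) ∧ T.Q v v ≤ T.Q u u)
    (hreg1 : ∀ u ∈ T.dom, u ∈ PartDom T Set.univ)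
    (hreg2 : ∀ φ : Y → ℝ, Continuous φ → HasCompactSupport φ → ∀ ε > 0,
      ∃ ψ : Y → ℝ, Continuous ψ ∧ HasCompactSupport ψ ∧
        (∃ u ∈ T.dom, (u : Y → ℝ) =ᵐ[μ] ψ) ∧ ∀ x, |φ x - ψ x| < ε)
    (hlocal : ∀ u ∈ T.dom, ∀ v ∈ T.dom,
      ((fun x => (u : Y → ℝ) x * (v : Y → ℝ) x) =ᵐ[μ] 0) → T.Q u v = 0)
    (A : Set Y) (hA : IsOpen A)
    (B : Set Y) (hB : ∃ x ∈ A, B = connectedComponentIn A x) :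
    ∀ u : Lp ℝ 2 μ, (u ∈ PartDom T A ∧ indMul B u = u) ↔ u ∈ PartDom T B := by
  obtain ⟨x₀, hx₀A, rfl⟩ := hB
  set B := connectedComponentIn A x₀ with hBdef
  have hBopen : IsOpen B := hA.connectedComponentIn
  have hBmeas : MeasurableSet B := hBopen.measurableSet
  have hBA : B ⊆ A := connectedComponentIn_subset _ _
  have hABopen : IsOpen (A \ B) := by
    rw [isOpen_iff_forall_mem_open]
    rintro y ⟨hyA, hyB⟩
    refine ⟨connectedComponentIn A y, fun z hz =>
      ⟨connectedComponentIn_subset _ _ hz, fun hzB => hyB ?_⟩,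
      hA.connectedComponentIn, mem_connectedComponentIn hyA⟩
    have h1 : connectedComponentIn A y = connectedComponentIn A z := connectedComponentIn_eq hz
    have h2 : connectedComponentIn A x₀ = connectedComponentIn A z := connectedComponentIn_eq hzB
    rw [hBdef, h2, ← h1]
    exact mem_connectedComponentIn hyA
  intro u
  constructor
  · rintro ⟨⟨hudom, g, hg, hgconv⟩, hind⟩
    choose gdom φ hφc hφcs hφsupp hgφ using hg
    have hgconv' : Tendsto (fun m => T.en (g m - u)) atTop (nhds 0) := hgconv
    have huae : (u : Y → ℝ) =ᵐ[μ] B.indicator u := (indMul_eq_self_iff hBmeas u).1 hind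
    -- Key construction: domain elements a.e. equal to `φ m` cut down to `B`.
    have key : ∀ m, ∃ b, b ∈ T.dom ∧ ∃ ψ : Y → ℝ, Continuous ψ ∧ HasCompactSupport ψ ∧
        tsupport ψ ⊆ B ∧ ((b : Y → ℝ) =ᵐ[μ] ψ) ∧ (∀ x ∈ B, ψ x = φ m x) ∧
        (∀ x ∉ B, ψ x = 0) := by
      intro m
      -- the compact set where we need the cutoff to be large
      have hKeq : B ∩ tsupport (φ m) = tsupport (φ m) ∩ (A \ B)ᶜ := by
        ext z
        constructor
        · rintro ⟨hzB, hzs⟩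
          exact ⟨hzs, fun hzAB => hzAB.2 hzB⟩
        · rintro ⟨hzs, hzAB⟩
          have hzA : z ∈ A := hφsupp m hzs
          exact ⟨by_contra fun hzB => hzAB ⟨hzA, hzB⟩, hzs⟩
      have hKcl : IsClosed (B ∩ tsupport (φ m)) :=
        hKeq ▸ (isClosed_tsupport _).inter hABopen.isClosed_compl
      have hKcomp : IsCompact (B ∩ tsupport (φ m)) :=
        IsCompact.of_isClosed_subset (hφcs m) hKcl Set.inter_subset_right
      have hKB : B ∩ tsupport (φ m) ⊆ B := Set.inter_subset_left
      -- a bound for φ m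
      obtain ⟨M₀, hM₀⟩ := (IsCompact.image (hφcs m) (hφc m).abs).bddAbove
      set M := max M₀ 0 with hMdef
      have hMnonneg : 0 ≤ M := le_max_right _ _
      have hM : ∀ x, |φ m x| ≤ M := by
        intro x
        by_cases hx : x ∈ tsupport (φ m)
        · exact le_trans (hM₀ (Set.mem_image_of_mem _ hx)) (le_max_left _ _)
        · simp only [image_eq_zero_of_notMem_tsupport hx, abs_zero]
          exact hMnonneg
      -- Urysohn function
      obtain ⟨f, hf1, hf0, hfcs, hf01⟩ :=
        exists_continuous_one_zero_of_isCompact hKcomp hBopen.isClosed_compl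
          (Set.disjoint_left.2 fun z hz hz' => hz' (hKB hz))
      -- approximate by a domain element
      obtain ⟨ψ₀, hψ₀c, hψ₀cs, ⟨v, hvdom, hvψ₀⟩, hψ₀close⟩ :=
        hreg2 f f.continuous hfcs (1/4) (by norm_num)
      obtain ⟨w₁, hw₁dom, hw₁⟩ := cut_dom T hDirichlet hvdom hvψ₀
        (show (0:ℝ) < 3/4 by norm_num)
      obtain ⟨w₂, hw₂dom, hw₂⟩ := cut_dom T hDirichlet hvdom hvψ₀
        (show (0:ℝ) < 1/4 by norm_num)
      -- the cutoff function
      set χ : Y → ℝ :=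
        fun x => (2*M) * (max 0 (min (ψ₀ x) (3/4)) - max 0 (min (ψ₀ x) (1/4))) with hχdef
      have hχc : Continuous χ := by
        apply continuous_const.mul
        exact (continuous_const.max (hψ₀c.min continuous_const)).sub
          (continuous_const.max (hψ₀c.min continuous_const))
      have hd01 : ∀ t : ℝ, 0 ≤ max 0 (min t (3/4)) - max 0 (min t (1/4)) ∧
          max 0 (min t (3/4)) - max 0 (min t (1/4)) ≤ 1/2 := by
        intro t
        constructor <;> (simp only [max_def, min_def]; split_ifs <;> linarith)
      have hdhigh : ∀ t : ℝ, 3/4 ≤ t →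
          max 0 (min t (3/4)) - max 0 (min t (1/4)) = 1/2 := by
        intro t ht
        simp only [max_def, min_def]
        split_ifs <;> linarith
      have hdlow : ∀ t : ℝ, t ≤ 1/4 →
          max 0 (min t (3/4)) - max 0 (min t (1/4)) = 0 := by
        intro t ht
        simp only [max_def, min_def]
        split_ifs <;> linarith
      have hχK : ∀ x ∈ B ∩ tsupport (φ m), χ x = M := by
        intro x hx
        have h1 : f x = 1 := hf1 hx
        have h2 : (3:ℝ)/4 ≤ ψ₀ x := by
          have h3 := hψ₀close x
          rw [h1] at h3
          have h4 := abs_lt.1 h3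
          linarith [h4.2]
        simp only [hχdef]
        rw [hdhigh _ h2]
        ring
      have hχ0 : ∀ x ∉ B, χ x = 0 := by
        intro x hx
        have h1 : f x = 0 := hf0 hx
        have h2 : ψ₀ x ≤ 1/4 := by
          have h3 := hψ₀close x
          rw [h1] at h3
          have h4 := abs_lt.1 h3
          linarith [h4.1]
        simp only [hχdef]
        rw [hdlow _ h2]
        ring
      have hχnonneg : ∀ x, 0 ≤ χ x := fun x =>
        mul_nonneg (by linarith) (hd01 _).1
      have hχsupp_le : ∀ x, χ x ≠ 0 → 1/4 ≤ ψ₀ x := by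
        intro x hx
        by_contra h
        apply hx
        simp only [hχdef]
        rw [hdlow _ (le_of_not_ge h)]
        ring
      have hχtsupp : tsupport χ ⊆ {x | 1/4 ≤ ψ₀ x} :=
        closure_minimal (fun x hx => hχsupp_le x hx)
          (isClosed_le continuous_const hψ₀c)
      have hχB : tsupport χ ⊆ B := by
        intro x hx
        by_contra hxB
        have h0 : f x = 0 := hf0 hxB
        have h14 : 1/4 ≤ ψ₀ x := hχtsupp hx
        have h3 := hψ₀close x
        rw [h0] at h3
        have h4 := abs_lt.1 h3
        linarith [h4.1]
      have hχsuppψ₀ : Function.support χ ⊆ Function.support ψ₀ := by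
        intro x hx
        simp only [Function.mem_support] at hx ⊢
        intro h0
        apply hx
        simp only [hχdef]
        rw [h0, hdlow 0 (by norm_num)]
        ring
      have hχcs : HasCompactSupport χ :=
        IsCompact.of_isClosed_subset hψ₀cs (isClosed_tsupport χ) (closure_mono hχsuppψ₀)
      -- the cutoff as a domain element
      have hwdom : (2*M : ℝ) • (w₁ - w₂) ∈ T.dom :=
        T.dom.smul_mem _ (T.dom.sub_mem hw₁dom hw₂dom)
      have hwχ : (((2*M : ℝ) • (w₁ - w₂) : Lp ℝ 2 μ) : Y → ℝ) =ᵐ[μ] χ := by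
        filter_upwards [Lp.coeFn_smul (2*M : ℝ) (w₁ - w₂), Lp.coeFn_sub w₁ w₂, hw₁, hw₂]
          with x h1 h2 h3 h4
        rw [h1]
        simp only [Pi.smul_apply, smul_eq_mul]
        rw [h2]
        simp only [Pi.sub_apply]
        rw [h3, h4]
      -- positive and negative parts of g m
      have hp1dom : (2⁻¹ : ℝ) • (g m + |g m|) ∈ T.dom :=
        T.dom.smul_mem _ (T.dom.add_mem (gdom m) (hposp _ (gdom m)).1)
      have hp1ae : (((2⁻¹ : ℝ) • (g m + |g m|) : Lp ℝ 2 μ) : Y → ℝ) =ᵐ[μ]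
          fun x => max (φ m x) 0 := by
        filter_upwards [Lp.coeFn_smul (2⁻¹ : ℝ) (g m + |g m|), Lp.coeFn_add (g m) |g m|,
          Lp.coeFn_abs (g m), hgφ m] with x h1 h2 h3 h4
        rw [h1]
        simp only [Pi.smul_apply, smul_eq_mul]
        rw [h2]
        simp only [Pi.add_apply]
        rw [h3, h4]
        rcases le_total (φ m x) 0 with h | h
        · rw [abs_of_nonpos h, max_eq_right h]
          ring
        · rw [abs_of_nonneg h, max_eq_left h]
          ring
      have hp2dom : (2⁻¹ : ℝ) • (|g m| - g m) ∈ T.dom :=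
        T.dom.smul_mem _ (T.dom.sub_mem (hposp _ (gdom m)).1 (gdom m))
      have hp2ae : (((2⁻¹ : ℝ) • (|g m| - g m) : Lp ℝ 2 μ) : Y → ℝ) =ᵐ[μ]
          fun x => max (-(φ m x)) 0 := by
        filter_upwards [Lp.coeFn_smul (2⁻¹ : ℝ) (|g m| - g m), Lp.coeFn_sub |g m| (g m),
          Lp.coeFn_abs (g m), hgφ m] with x h1 h2 h3 h4
        rw [h1]
        simp only [Pi.smul_apply, smul_eq_mul]
        rw [h2]
        simp only [Pi.sub_apply]
        rw [h3, h4]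
        rcases le_total (φ m x) 0 with h | h
        · rw [abs_of_nonpos h, max_eq_left (by linarith)]
          ring
        · rw [abs_of_nonneg h, max_eq_right (by linarith)]
          ring
      obtain ⟨z₁, hz₁dom, hz₁ae⟩ := min_dom T hposp hp1dom hwdom hp1ae hwχ
      obtain ⟨z₂, hz₂dom, hz₂ae⟩ := min_dom T hposp hp2dom hwdom hp2ae hwχ
      have hsuppsub : Function.support
          (fun x => min (max (φ m x) 0) (χ x) - min (max (-(φ m x)) 0) (χ x)) ⊆
          Function.support χ := by
        intro x hx
        simp only [Function.mem_support] at hx ⊢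
        intro h0
        apply hx
        rw [h0, min_eq_right (le_max_right _ _), min_eq_right (le_max_right _ _), sub_self]
      refine ⟨z₁ - z₂, T.dom.sub_mem hz₁dom hz₂dom,
        fun x => min (max (φ m x) 0) (χ x) - min (max (-(φ m x)) 0) (χ x),
        (((hφc m).max continuous_const).min hχc).sub
          (((hφc m).neg.max continuous_const).min hχc),
        ?_, ?_, ?_, ?_, ?_⟩
      · exact IsCompact.of_isClosed_subset hχcs (isClosed_tsupport _)
          (closure_mono hsuppsub)
      · exact (closure_mono hsuppsub).trans hχB
      · filter_upwards [Lp.coeFn_sub z₁ z₂, hz₁ae, hz₂ae] with x h1 h2 h3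
        rw [h1]
        simp only [Pi.sub_apply]
        rw [h2, h3]
      · intro x hxB
        show min (max (φ m x) 0) (χ x) - min (max (-(φ m x)) 0) (χ x) = _
        by_cases hxs : x ∈ tsupport (φ m)
        · rw [hχK x ⟨hxB, hxs⟩,
            min_eq_left (max_le (le_trans (le_abs_self _) (hM x)) hMnonneg),
            min_eq_left (max_le (le_trans (neg_le_abs _) (hM x)) hMnonneg)]
          rcases le_total (φ m x) 0 with h | h
          · rw [max_eq_right h, max_eq_left (by linarith)]
            ring
          · rw [max_eq_left h, max_eq_right (by linarith)]
            ring
        · rw [image_eq_zero_of_notMem_tsupport hxs, neg_zero, max_self,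
            min_eq_left (hχnonneg x), sub_self]
      · intro x hxB
        show min (max (φ m x) 0) (χ x) - min (max (-(φ m x)) 0) (χ x) = 0
        rw [hχ0 x hxB, min_eq_right (le_max_right _ _), min_eq_right (le_max_right _ _),
          sub_self]
    choose b hbdom ψ hψc hψcs hψsuppB hbψ hψeqφ hψ0 using key
    -- the complementary parts
    set c : ℕ → Lp ℝ 2 μ := fun m => g m - b m with hcdef
    have hcdom : ∀ m, c m ∈ T.dom := fun m => T.dom.sub_mem (gdom m) (hbdom m)
    have hcae : ∀ m, ((c m : Y → ℝ)) =ᵐ[μ] fun x => φ m x - ψ m x := by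
      intro m
      filter_upwards [Lp.coeFn_sub (g m) (b m), hgφ m, hbψ m] with x h1 h2 h3
      show (c m : Y → ℝ) x = _
      rw [hcdef]
      simp only
      rw [h1]
      simp only [Pi.sub_apply]
      rw [h2, h3]
    have hortho : ∀ m n, T.Q (b m - b n) (c m - c n) = 0 ∧ ⟪b m - b n, c m - c n⟫ = 0 := by
      intro m n
      have hprod : (fun x => ((b m - b n : Lp ℝ 2 μ) : Y → ℝ) x *
          ((c m - c n : Lp ℝ 2 μ) : Y → ℝ) x) =ᵐ[μ] 0 := by
        filter_upwards [Lp.coeFn_sub (b m) (b n), Lp.coeFn_sub (c m) (c n),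
          hbψ m, hbψ n, hcae m, hcae n] with x h1 h2 h3 h4 h5 h6
        simp only [Pi.zero_apply]
        rw [h1, h2]
        simp only [Pi.sub_apply]
        rw [h3, h4, h5, h6]
        by_cases hxB : x ∈ B
        · rw [hψeqφ m x hxB, hψeqφ n x hxB]
          ring
        · rw [hψ0 m x hxB, hψ0 n x hxB]
          ring
      exact ⟨hlocal _ (T.dom.sub_mem (hbdom m) (hbdom n)) _
        (T.dom.sub_mem (hcdom m) (hcdom n)) hprod, inner_eq_zero_of_ae_mul hprod⟩
    have hg_sub : ∀ m n, g m - g n = (b m - b n) + (c m - c n) := by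
      intro m n
      rw [hcdef]
      simp only
      abel
    have hen_dec : ∀ m n, T.en (g m - g n) = T.en (b m - b n) + T.en (c m - c n) := by
      intro m n
      rw [hg_sub m n]
      exact T.en_add_eq _ _ (hortho m n).1 (hortho m n).2
    have hgcauchy : ∀ ε > 0, ∃ N, ∀ m ≥ N, ∀ n ≥ N, T.en (g m - g n) < ε := by
      intro ε hε
      obtain ⟨N, hN⟩ := eventually_atTop.1
        (hgconv'.eventually_lt_const (show (0:ℝ) < ε/4 by linarith))
      refine ⟨N, fun m hm n hn => ?_⟩
      have h1 : g m - g n = (g m - u) + -(g n - u) := by abel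
      calc T.en (g m - g n) ≤ 2 * T.en (g m - u) + 2 * T.en (-(g n - u)) := by
            rw [h1]
            exact T.en_add_le _ _
        _ = 2 * T.en (g m - u) + 2 * T.en (g n - u) := by rw [T.en_neg]
        _ < ε := by
            have h2 := hN m hm
            have h3 := hN n hn
            linarith
    have hbcauchy : ∀ ε > 0, ∃ N, ∀ m ≥ N, ∀ n ≥ N,
        T.Q (b m - b n) (b m - b n) + ‖b m - b n‖ ^ 2 < ε := by
      intro ε hε
      obtain ⟨N, hN⟩ := hgcauchy ε hε
      refine ⟨N, fun m hm n hn => lt_of_le_of_lt ?_ (hN m hm n hn)⟩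
      have h1 := hen_dec m n
      have h2 := T.en_nonneg (c m - c n)
      show T.en (b m - b n) ≤ T.en (g m - g n)
      linarith
    have hccauchy : ∀ ε > 0, ∃ N, ∀ m ≥ N, ∀ n ≥ N,
        T.Q (c m - c n) (c m - c n) + ‖c m - c n‖ ^ 2 < ε := by
      intro ε hε
      obtain ⟨N, hN⟩ := hgcauchy ε hε
      refine ⟨N, fun m hm n hn => lt_of_le_of_lt ?_ (hN m hm n hn)⟩
      have h1 := hen_dec m n
      have h2 := T.en_nonneg (b m - b n)
      show T.en (c m - c n) ≤ T.en (g m - g n)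
      linarith
    obtain ⟨binf, hbinfdom, hbconv⟩ := T.closed b hbdom hbcauchy
    obtain ⟨cinf, hcinfdom, hcconv⟩ := T.closed c hcdom hccauchy
    have hbL2 : Tendsto b atTop (nhds binf) := T.tendsto_of_en hbconv
    have hcL2 : Tendsto c atTop (nhds cinf) := T.tendsto_of_en hcconv
    have hgL2 : Tendsto g atTop (nhds u) := T.tendsto_of_en hgconv
    have hsum : u = binf + cinf := by
      have h1 : Tendsto g atTop (nhds (binf + cinf)) := by
        refine (hbL2.add hcL2).congr fun n => ?_
        rw [hcdef]
        simp only
        abel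
      exact tendsto_nhds_unique hgL2 h1
    have hbc : ∀ m n, ⟪b m, c n⟫ = 0 := by
      intro m n
      apply inner_eq_zero_of_ae_mul
      filter_upwards [hbψ m, hcae n] with x h1 h2
      simp only [Pi.zero_apply]
      rw [h1, h2]
      by_cases hxB : x ∈ B
      · rw [hψeqφ n x hxB]
        ring
      · rw [hψ0 m x hxB]
        ring
    have hcu : ∀ m, ⟪c m, u⟫ = 0 := by
      intro m
      apply inner_eq_zero_of_ae_mul
      filter_upwards [hcae m, huae] with x h1 h2
      simp only [Pi.zero_apply]
      rw [h1, h2]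
      by_cases hxB : x ∈ B
      · rw [hψeqφ m x hxB]
        ring
      · rw [Set.indicator_of_notMem hxB]
        ring
    have hcinfu : ⟪cinf, u⟫ = 0 := by
      have h1 : Tendsto (fun m => ⟪c m, u⟫) atTop (nhds ⟪cinf, u⟫) :=
        hcL2.inner tendsto_const_nhds
      exact tendsto_nhds_unique h1 (Tendsto.congr (fun m => (hcu m).symm) tendsto_const_nhds)
    have hbinfc : ∀ n, ⟪binf, c n⟫ = 0 := by
      intro n
      have h1 : Tendsto (fun m => ⟪b m, c n⟫) atTop (nhds ⟪binf, c n⟫) :=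
        hbL2.inner tendsto_const_nhds
      exact tendsto_nhds_unique h1 (Tendsto.congr (fun m => (hbc m n).symm) tendsto_const_nhds)
    have hbinfcinf : ⟪binf, cinf⟫ = 0 := by
      have h1 : Tendsto (fun n => ⟪binf, c n⟫) atTop (nhds ⟪binf, cinf⟫) :=
        tendsto_const_nhds.inner hcL2
      exact tendsto_nhds_unique h1 (Tendsto.congr (fun n => (hbinfc n).symm) tendsto_const_nhds)
    have hcinf0 : cinf = 0 := by
      have h2 : u - binf = cinf := by
        rw [hsum]
        abel
      have h3 : ⟪cinf, cinf⟫ = 0 := by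
        have h4 : ⟪u, cinf⟫ = 0 := by
          rw [real_inner_comm]
          exact hcinfu
        nth_rewrite 1 [← h2]
        rw [inner_sub_left, h4, hbinfcinf, sub_zero]
      exact inner_self_eq_zero.1 h3
    have hbinfu : binf = u := by
      rw [hsum, hcinf0, add_zero]
    refine ⟨hudom, b, fun m => ⟨hbdom m, ψ m, hψc m, hψcs m, hψsuppB m, hbψ m⟩, ?_⟩
    rw [← hbinfu]
    exact hbconv
  · rintro ⟨hudom, g, hg, hgconv⟩
    refine ⟨⟨hudom, g, fun m => ?_, hgconv⟩, ?_⟩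
    · obtain ⟨h1, φ, h2, h3, h4, h5⟩ := hg m
      exact ⟨h1, φ, h2, h3, h4.trans hBA, h5⟩
    · apply (indMul_eq_self_iff hBmeas u).2
      apply ae_indicator_of_tendsto hBmeas (g := g) ?_ (T.tendsto_of_en hgconv)
      intro m
      obtain ⟨h1, φ, h2, h3, h4, h5⟩ := hg m
      filter_upwards [h5] with x hx hxB
      rw [hx]
      exact image_eq_zero_of_notMem_tsupport fun hmem => hxB (h4 hmem)
end
end
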